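/- Suppose h : ℝ → ℝ is differentiable with (H₀/δ₁)·exp(-ξ²/(4δ₂)) ≤ h'(ξ) ≤ (H₀/δ₂)·exp(-ξ²/(4δ₁)) for all ξ ∈ ℝ, where H₀ < 0 and 0 < δ₁ ≤ δ₂, and h(0) = h₀. Then the limits h(±∞) exist and satisfy h₀ + (H₀/δ₁)√(πδ₂) ≤ h(+∞) ≤ h₀ + (H₀/δ₂)√(πδ₁) and h₀ − (H₀/δ₂)√(πδ₁) ≤ h(−∞) ≤ h₀ − (H₀/δ₁)√(πδ₂). -/
import Mathlib

open MeasureTheory Real Filter Set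

theorem stmt_9 (h : ℝ → ℝ) (δ₁ δ₂ H₀ h₀ : ℝ)
    (hδ₁ : 0 < δ₁) (hδ : δ₁ ≤ δ₂) (hH₀ : H₀ < 0)
    (hdiff : Differentiable ℝ h) (hh0 : h 0 = h₀)
    (hder : ∀ ξ : ℝ,
      (H₀ / δ₁) * Real.exp (-ξ ^ 2 / (4 * δ₂)) ≤ deriv h ξ ∧
      deriv h ξ ≤ (H₀ / δ₂) * Real.exp (-ξ ^ 2 / (4 * δ₁))) :
    ∃ Lplus Lminus : ℝ,
      Filter.Tendsto h Filter.atTop (nhds Lplus) ∧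
      Filter.Tendsto h Filter.atBot (nhds Lminus) ∧
      h₀ + (H₀ / δ₁) * Real.sqrt (Real.pi * δ₂) ≤ Lplus ∧
      Lplus ≤ h₀ + (H₀ / δ₂) * Real.sqrt (Real.pi * δ₁) ∧
      h₀ - (H₀ / δ₂) * Real.sqrt (Real.pi * δ₁) ≤ Lminus ∧
      Lminus ≤ h₀ - (H₀ / δ₁) * Real.sqrt (Real.pi * δ₂) := by
  have hδ₂ : 0 < δ₂ := hδ₁.trans_le hδ
  set f := deriv h with hf
  -- Gaussian facts
  have hGint : ∀ δ : ℝ, 0 < δ → Integrable (fun t : ℝ => Real.exp (-t ^ 2 / (4 * δ))) := by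
    intro δ hδpos
    have heq : (fun t : ℝ => Real.exp (-t ^ 2 / (4 * δ)))
        = fun t : ℝ => Real.exp (-(1 / (4 * δ)) * t ^ 2) := by
      funext t; congr 1; field_simp
    rw [heq]
    exact integrable_exp_neg_mul_sq (b := 1 / (4 * δ)) (by positivity)
  have hGIoi : ∀ δ : ℝ, 0 < δ →
      (∫ t in Ioi (0:ℝ), Real.exp (-t ^ 2 / (4 * δ))) = Real.sqrt (Real.pi * δ) := by
    intro δ hδpos
    have h1 : (∫ t in Ioi (0:ℝ), Real.exp (-(1 / (4 * δ)) * t ^ 2))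
        = Real.sqrt (Real.pi / (1 / (4 * δ))) / 2 := integral_gaussian_Ioi _
    have h2 : ∀ t : ℝ, -(1 / (4 * δ)) * t ^ 2 = -t ^ 2 / (4 * δ) := by
      intro t; field_simp
    simp_rw [h2] at h1
    rw [h1]
    have h3 : Real.pi / (1 / (4 * δ)) = 2 ^ 2 * (Real.pi * δ) := by field_simp; ring
    rw [h3, Real.sqrt_mul (by positivity), Real.sqrt_sq (by norm_num : (0:ℝ) ≤ 2)]
    ring
  have hGIic : ∀ δ : ℝ, 0 < δ →
      (∫ t in Iic (0:ℝ), Real.exp (-t ^ 2 / (4 * δ))) = Real.sqrt (Real.pi * δ) := by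
    intro δ hδpos
    rw [← hGIoi δ hδpos]
    have := integral_comp_neg_Ioi (0:ℝ) (fun t => Real.exp (-t ^ 2 / (4 * δ)))
    simp only [neg_zero] at this
    rw [← this]
    congr 1 with t
    ring_nf
  -- integrability of f
  have hfneg : ∀ ξ, f ξ ≤ 0 := fun ξ => (hder ξ).2.trans
    (mul_nonpos_of_nonpos_of_nonneg (div_nonpos_of_nonpos_of_nonneg hH₀.le hδ₂.le)
      (Real.exp_pos _).le)
  have hfint : Integrable f := by
    refine Integrable.mono' ((hGint δ₂ hδ₂).const_mul (-(H₀ / δ₁)))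
      (measurable_deriv h).aestronglyMeasurable (Eventually.of_forall fun ξ => ?_)
    rw [Real.norm_eq_abs, abs_of_nonpos (hfneg ξ)]
    have := (hder ξ).1
    nlinarith [this]
  -- FTC
  have hFTC : ∀ x : ℝ, (∫ t in (0:ℝ)..x, f t) = h x - h 0 := by
    intro x
    exact intervalIntegral.integral_eq_sub_of_hasDerivAt
      (fun t _ => (hdiff t).hasDerivAt) hfint.intervalIntegrable
  -- limits
  have tplus : Tendsto h atTop (nhds (h₀ + ∫ t in Ioi (0:ℝ), f t)) := by
    have := intervalIntegral_tendsto_integral_Ioi 0 hfint.integrableOn (tendsto_id (α := ℝ))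
    have t2 : Tendsto (fun x : ℝ => h 0 + ∫ t in (0:ℝ)..x, f t) atTop
        (nhds (h 0 + ∫ t in Ioi (0:ℝ), f t)) := tendsto_const_nhds.add this
    rw [hh0] at t2
    refine t2.congr fun x => ?_
    rw [hFTC x, hh0]; ring
  have tminus : Tendsto h atBot (nhds (h₀ - ∫ t in Iic (0:ℝ), f t)) := by
    have := intervalIntegral_tendsto_integral_Iic 0 hfint.integrableOn (tendsto_id (α := ℝ))
    have t2 : Tendsto (fun x : ℝ => h 0 - ∫ t in x..(0:ℝ), f t) atBot
        (nhds (h 0 - ∫ t in Iic (0:ℝ), f t)) := tendsto_const_nhds.sub this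
    rw [hh0] at t2
    refine t2.congr fun x => ?_
    rw [intervalIntegral.integral_symm, hFTC x, hh0]; ring
  -- integral bounds
  have hIoilb : (H₀ / δ₁) * Real.sqrt (Real.pi * δ₂) ≤ ∫ t in Ioi (0:ℝ), f t := by
    rw [← hGIoi δ₂ hδ₂, ← integral_const_mul]
    exact setIntegral_mono (((hGint δ₂ hδ₂).const_mul _).integrableOn) hfint.integrableOn
      fun ξ => (hder ξ).1
  have hIoiub : (∫ t in Ioi (0:ℝ), f t) ≤ (H₀ / δ₂) * Real.sqrt (Real.pi * δ₁) := by
    rw [← hGIoi δ₁ hδ₁, ← integral_const_mul]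
    exact setIntegral_mono hfint.integrableOn (((hGint δ₁ hδ₁).const_mul _).integrableOn)
      fun ξ => (hder ξ).2
  have hIiclb : (H₀ / δ₁) * Real.sqrt (Real.pi * δ₂) ≤ ∫ t in Iic (0:ℝ), f t := by
    rw [← hGIic δ₂ hδ₂, ← integral_const_mul]
    exact setIntegral_mono (((hGint δ₂ hδ₂).const_mul _).integrableOn) hfint.integrableOn
      fun ξ => (hder ξ).1
  have hIicub : (∫ t in Iic (0:ℝ), f t) ≤ (H₀ / δ₂) * Real.sqrt (Real.pi * δ₁) := by
    rw [← hGIic δ₁ hδ₁, ← integral_const_mul]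
    exact setIntegral_mono hfint.integrableOn (((hGint δ₁ hδ₁).const_mul _).integrableOn)
      fun ξ => (hder ξ).2
  exact ⟨_, _, tplus, tminus, by linarith, by linarith, by linarith, by linarith⟩
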